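/- Let 0 ≤ a < b ≤ 1, r ∈ [0,1), and N ≥ 1 a natural number. The number of indices k ∈ {0,...,N-1} such that (r + k/N) mod 1 ∈ [a, b) equals ⌈(b - r)·N⌉ - ⌈(a - r)·N⌉. -/

import Mathlib

/-- The number of indices k ∈ {0,...,N-1} such that (r + k/N) mod 1 ∈ [a,b)
equals ⌈(b-r)·N⌉ - ⌈(a-r)·N⌉. -/
theorem stmt3 (a b r : ℝ) (h0 : 0 ≤ a) (hab : a < b) (hb : b ≤ 1)
    (hr : r ∈ Set.Ico (0:ℝ) 1) (N : ℕ) (hN : 1 ≤ N) :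
    (((Finset.range N).filter
        (fun k : ℕ => Int.fract (r + (k : ℝ) / N) ∈ Set.Ico a b)).card : ℤ)
      = ⌈(b - r) * N⌉ - ⌈(a - r) * N⌉ := by
  obtain ⟨hr0, hr1⟩ := hr
  have hN0 : (0:ℝ) < N := by positivity
  set A := ⌈(a - r) * N⌉ with hA
  set B := ⌈(b - r) * N⌉ with hB
  have e1 : ∀ x : ℝ, (a ≤ r + x / N) ↔ (a - r) * N ≤ x := by
    intro x
    rw [← sub_le_iff_le_add', ← le_div_iff₀ hN0]
  have e2 : ∀ x : ℝ, (r + x / N < b) ↔ x < (b - r) * N := by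
    intro x
    rw [← lt_sub_iff_add_lt', ← div_lt_iff₀ hN0]
  have eA : ∀ n : ℤ, (A ≤ n) ↔ (a - r) * N ≤ (n : ℝ) := fun n => Int.ceil_le
  have eB : ∀ n : ℤ, (n < B) ↔ ((n : ℝ) < (b - r) * N) := fun n => Int.lt_ceil
  have hAB : A ≤ B := Int.ceil_le_ceil (by nlinarith)
  have hBN : B ≤ N := Int.ceil_le.mpr (by push_cast; nlinarith)
  have hNA : -(N:ℤ) < A := Int.lt_ceil.mpr (by push_cast; nlinarith)
  have hBAN : B ≤ A + N := by
    have h1 : ((a - r) * N : ℝ) ≤ A := Int.le_ceil _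
    have h2 : (B : ℝ) < (b - r) * N + 1 := Int.ceil_lt_add_one _
    have : (B : ℝ) < (A : ℝ) + N + 1 := by nlinarith
    have : B < A + N + 1 := by exact_mod_cast this
    omega
  -- rewrite the predicate
  have key : ∀ k ∈ Finset.range N,
      (Int.fract (r + (k : ℝ) / N) ∈ Set.Ico a b ↔
        ((A ≤ (k:ℤ) ∧ (k:ℤ) < B) ∨ (A + N ≤ (k:ℤ) ∧ (k:ℤ) < B + N))) := by
    intro k hk
    rw [Finset.mem_range] at hk
    have hkN : (k : ℝ) < N := by exact_mod_cast hk
    have hk0 : (0:ℝ) ≤ (k : ℝ) / N := by positivity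
    have hkN1 : (k : ℝ) / N < 1 := by rw [div_lt_one hN0]; exact hkN
    have hsub : r + (k:ℝ)/N - 1 = r + ((k:ℝ) - N)/N := by
      field_simp
      ring
    have hiff1 : (a ≤ r + (k:ℝ)/N ∧ r + (k:ℝ)/N < b) ↔ (A ≤ (k:ℤ) ∧ (k:ℤ) < B) := by
      rw [e1, e2, eA, eB]
      push_cast
      tauto
    have hiff2 : (a ≤ r + (k:ℝ)/N - 1 ∧ r + (k:ℝ)/N - 1 < b) ↔
        (A + N ≤ (k:ℤ) ∧ (k:ℤ) < B + N) := by
      rw [hsub, e1, e2]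
      have e3 : (A + N ≤ (k:ℤ)) ↔ (A ≤ (k:ℤ) - N) := by omega
      have e4 : ((k:ℤ) < B + N) ↔ ((k:ℤ) - N < B) := by omega
      rw [e3, e4, eA, eB]
      push_cast
      tauto
    by_cases hc : r + (k:ℝ)/N < 1
    · have hfr : Int.fract (r + (k:ℝ)/N) = r + (k:ℝ)/N :=
        Int.fract_eq_self.mpr ⟨by positivity, hc⟩
      rw [hfr]
      simp only [Set.mem_Ico]
      rw [hiff1]
      constructor
      · exact Or.inl
      · rintro (h | h)
        · exact h
        · exfalso
          have := hiff2.mpr h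
          linarith [this.1]
    · push_neg at hc
      have hfr : Int.fract (r + (k:ℝ)/N) = r + (k:ℝ)/N - 1 := by
        have : Int.fract (r + (k:ℝ)/N) = Int.fract (r + (k:ℝ)/N - 1) := by
          rw [show ((1:ℝ)) = ((1:ℤ):ℝ) by norm_num, Int.fract_sub_intCast]
        rw [this]
        exact Int.fract_eq_self.mpr ⟨by linarith, by linarith⟩
      rw [hfr]
      simp only [Set.mem_Ico]
      rw [hiff2]
      constructor
      · exact Or.inr
      · rintro (h | h)
        · exfalso
          have := hiff1.mpr h
          linarith [this.2]
        · exact h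
  rw [Finset.filter_congr key]
  -- transfer to ℤ
  have hcard : ((Finset.range N).filter (fun k : ℕ =>
      (A ≤ (k:ℤ) ∧ (k:ℤ) < B) ∨ (A + N ≤ (k:ℤ) ∧ (k:ℤ) < B + N))).card
      = ((Finset.Ico (0:ℤ) (N:ℤ)).filter (fun n : ℤ =>
      (A ≤ n ∧ n < B) ∨ (A + N ≤ n ∧ n < B + N))).card := by
    refine Finset.card_nbij (fun k : ℕ => (k : ℤ)) ?_ ?_ ?_
    · intro k hk
      simp only [Finset.mem_coe, Finset.mem_filter, Finset.mem_range] at hk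
      simp only [Finset.mem_coe, Finset.mem_filter, Finset.mem_Ico]
      exact ⟨⟨Int.ofNat_nonneg k, by exact_mod_cast hk.1⟩, hk.2⟩
    · intro k₁ _ k₂ _ h
      simp only at h
      exact_mod_cast h
    · intro n hn
      simp only [Finset.coe_filter, Finset.mem_Ico, Set.mem_setOf_eq] at hn
      refine ⟨n.toNat, ?_, ?_⟩
      · simp only [Finset.coe_filter, Finset.mem_range, Set.mem_setOf_eq]
        rw [Int.toNat_of_nonneg hn.1.1]
        exact ⟨by omega, hn.2⟩
      · exact Int.toNat_of_nonneg hn.1.1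
  rw [hcard]
  have hset : ((Finset.Ico (0:ℤ) (N:ℤ)).filter (fun n : ℤ =>
      (A ≤ n ∧ n < B) ∨ (A + N ≤ n ∧ n < B + N)))
      = Finset.Ico (max 0 A) (min (N:ℤ) B) ∪
        Finset.Ico (max 0 (A + N)) (min (N:ℤ) (B + N)) := by
    ext n
    simp only [Finset.mem_filter, Finset.mem_Ico, Finset.mem_union,
      le_max_iff, max_le_iff, lt_min_iff, min_lt_iff]
    omega
  rw [hset, Finset.card_union_of_disjoint]
  · rw [Int.card_Ico, Int.card_Ico]
    push_cast
    omega
  · rw [Finset.disjoint_left]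
    intro n hn1 hn2
    simp only [Finset.mem_Ico] at hn1 hn2
    omega
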